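/- Fix a node u ∈ V and a node v ∈ V with v ≠ u. Let W be a random √c-walk from u. Then the expectation over W of the single-trial estimator s̃_W(v) equals s(u,v), the probability that two independent √c-walks from u and from v meet; i.e., the estimator is unbiased. -/

import Mathlib

open scoped BigOperators Classical

variable {V : Type*}

/-- `p` is a possible realization of a `√c`-walk from `u`: it is nonempty,
starts at `u`, and each step moves to an in-neighbor of the current node. -/
def IsWalkFrom (I : V → Finset V) (u : V) (p : List V) : Prop :=
  p.head? = some u ∧ List.Chain' (fun a b => b ∈ I a) p

/-- The probability that the `√c`-walk from `u` is exactly the finite sequence `p`: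
`(1−√c)·∏_{k=1}^{ℓ−1} (√c/|I(u_k)|)` if `p = (u_1,…,u_ℓ)` is a walk from `u`,
and `0` otherwise. -/
noncomputable def walkWeight (I : V → Finset V) (c : ℝ) (u : V) (p : List V) : ℝ :=
  if IsWalkFrom I u p then
    (1 - Real.sqrt c) *
      ∏ k ∈ Finset.range (p.length - 1), Real.sqrt c / ((I (p.getD k u)).card : ℝ)
  else 0

/-- Two finite sequences meet: for some index both sequences are long enough and
their entries at that index coincide. -/
def Meets (w₁ w₂ : List V) : Prop :=
  ∃ k, k < w₁.length ∧ k < w₂.length ∧ w₁[k]? = w₂[k]?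

/-- SimRank `s(u,v)`: the probability that two independent `√c`-walks from `u`
and from `v` meet. -/
noncomputable def simRank (I : V → Finset V) (c : ℝ) (u v : V) : ℝ :=
  ∑' w : List V × List V,
    walkWeight I c u w.1 * walkWeight I c v w.2 * (if Meets w.1 w.2 then 1 else 0)

/-- Deterministic PROBE scores of a reverse path, where `q` is the *reversed*
reverse path, i.e. `q = (u_i, u_{i-1}, …, u_1)` for the reverse path
`(u_1,…,u_i)`: `Score(v,0) = 1` iff `v = u_i`, and `Score(v,j+1) = 0` if
`v = u_{i-j-1}` (which is `q[j+1]`), else `∑_{x∈I(v)} (√c/|I(v)|)·Score(x,j)`. -/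
noncomputable def Score (I : V → Finset V) (c : ℝ) (q : List V) : ℕ → V → ℝ
  | 0, v => if q.head? = some v then 1 else 0
  | j + 1, v =>
      if q[j + 1]? = some v then 0
      else ∑ x ∈ I v, Real.sqrt c / ((I v).card : ℝ) * Score I c q j x

/-- The single-trial estimator `s̃_W(v) = ∑_{i=2}^{ℓ} Score^{(i)}(v, i−1)` for a
fixed sequence `W = p`, where `Score^{(i)}` denotes the PROBE scores of the
prefix `(u_1,…,u_i)`. -/
noncomputable def estimator (I : V → Finset V) (c : ℝ) (p : List V) (v : V) : ℝ :=
  ∑ i ∈ Finset.Icc 2 p.length, Score I c ((p.take i).reverse) (i - 1) v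

section Helpers

open ENNReal

variable (I : V → Finset V) (c : ℝ)

/-- The first index at which two sequences meet. -/
def FirstMeet (w₁ w₂ : List V) (k : ℕ) : Prop :=
  k < w₁.length ∧ k < w₂.length ∧ w₁[k]? = w₂[k]? ∧ ∀ j < k, w₁[j]? ≠ w₂[j]?

/-- The walk weight as an extended nonnegative real. -/
noncomputable def Ww (u : V) (w : List V) : ℝ≥0∞ := ENNReal.ofReal (walkWeight I c u w)

lemma sqrt_lt_one' (hc0 : 0 ≤ c) (hc1 : c < 1) : Real.sqrt c < 1 := by
  have h := Real.sqrt_lt_sqrt hc0 hc1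
  rwa [Real.sqrt_one] at h

lemma walkWeight_nonneg (hc0 : 0 ≤ c) (hc1 : c < 1) (u : V) (w : List V) :
    0 ≤ walkWeight I c u w := by
  unfold walkWeight
  split
  · refine mul_nonneg (by have := sqrt_lt_one' c hc0 hc1; linarith) ?_
    exact Finset.prod_nonneg fun k _ => div_nonneg (Real.sqrt_nonneg c) (Nat.cast_nonneg _)
  · exact le_rfl

lemma score_nonneg (hc0 : 0 ≤ c) (j : ℕ) : ∀ (q : List V) (v : V), 0 ≤ Score I c q j v := by
  induction j with
  | zero =>
    intro q v
    simp only [Score]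
    split <;> norm_num
  | succ j ih =>
    intro q v
    simp only [Score]
    split
    · exact le_rfl
    · exact Finset.sum_nonneg fun x _ =>
        mul_nonneg (div_nonneg (Real.sqrt_nonneg c) (Nat.cast_nonneg _)) (ih q x)

lemma score_congr (j : ℕ) : ∀ (q q' : List V), (∀ m ≤ j, q[m]? = q'[m]?) →
    ∀ v, Score I c q j v = Score I c q' j v := by
  induction j with
  | zero =>
    intro q q' h v
    simp only [Score, List.head?_eq_getElem?, h 0 (le_refl 0)]
  | succ j ih =>
    intro q q' h v
    simp only [Score, h (j+1) le_rfl]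
    split
    · rfl
    · exact Finset.sum_congr rfl fun x _ => by
        rw [ih q q' (fun m hm => h m (le_trans hm (Nat.le_succ j))) x]

end Helpers

section Helpers2

open ENNReal

variable (I : V → Finset V) (c : ℝ)

lemma isWalkFrom_cons {v x : V} {t : List V} (ht : t.head? = some x) :
    IsWalkFrom I v (v :: t) ↔ x ∈ I v ∧ IsWalkFrom I x t := by
  cases t with
  | nil => simp at ht
  | cons y s =>
    simp only [List.head?_cons, Option.some.injEq] at ht
    subst ht
    simp only [IsWalkFrom, List.head?_cons, List.Chain', List.isChain_cons_cons]
    tauto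

lemma walkWeight_cons (hc0 : 0 ≤ c) {v x : V} {t : List V} (ht : t.head? = some x) :
    walkWeight I c v (v :: t) =
      (if x ∈ I v then Real.sqrt c / ((I v).card : ℝ) else 0) * walkWeight I c x t := by
  by_cases hx : x ∈ I v
  · rw [if_pos hx]
    by_cases hw : IsWalkFrom I x t
    · have hw' : IsWalkFrom I v (v :: t) := (isWalkFrom_cons I ht).mpr ⟨hx, hw⟩
      unfold walkWeight
      rw [if_pos hw', if_pos hw]
      have hlen : t.length ≠ 0 := by
        cases t with
        | nil => simp at ht
        | cons a b => simp
      obtain ⟨n, hn⟩ : ∃ n, t.length = n + 1 := ⟨t.length - 1, by omega⟩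
      have h1 : (v :: t).length - 1 = n + 1 := by simp [hn]
      rw [h1, Finset.prod_range_succ']
      have h2 : ∀ k ∈ Finset.range n,
          Real.sqrt c / (((I ((v :: t).getD (k+1) v)).card : ℝ))
            = Real.sqrt c / (((I (t.getD k x)).card : ℝ)) := by
        intro k hk
        simp only [Finset.mem_range] at hk
        rw [List.getD_cons_succ, List.getD_eq_getElem t v (by omega),
          List.getD_eq_getElem t x (by omega)]
      rw [Finset.prod_congr rfl h2]
      have h3 : (v :: t).getD 0 v = v := rfl
      rw [h3, hn]
      simp only [Nat.add_sub_cancel]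
      ring
    · have hw' : ¬ IsWalkFrom I v (v :: t) := fun h => hw ((isWalkFrom_cons I ht).mp h).2
      unfold walkWeight
      rw [if_neg hw', if_neg hw]
      ring
  · have hw' : ¬ IsWalkFrom I v (v :: t) := fun h => hx ((isWalkFrom_cons I ht).mp h).1
    unfold walkWeight
    rw [if_neg hw', if_neg hx]
    ring

lemma Ww_cons (hc0 : 0 ≤ c) {v x : V} {t : List V} (ht : t.head? = some x) :
    Ww I c v (v :: t) =
      (if x ∈ I v then ENNReal.ofReal (Real.sqrt c / ((I v).card : ℝ)) else 0) * Ww I c x t := by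
  unfold Ww
  rw [walkWeight_cons I c hc0 ht]
  by_cases hx : x ∈ I v
  · rw [if_pos hx, if_pos hx,
      ENNReal.ofReal_mul (div_nonneg (Real.sqrt_nonneg c) (Nat.cast_nonneg _))]
  · rw [if_neg hx, if_neg hx, zero_mul, ENNReal.ofReal_zero, zero_mul]

lemma isWalkFrom_of_Ww_ne {u : V} {w : List V} (h : Ww I c u w ≠ 0) : IsWalkFrom I u w := by
  by_contra hw
  apply h
  simp [Ww, walkWeight, hw]

lemma tsum_cons_eq (v : V) (F : List V → ℝ≥0∞) (hF : ∀ w, F w ≠ 0 → w.head? = some v) :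
    ∑' w : List V, F w = ∑' t : List V, F (v :: t) := by
  refine (Function.Injective.tsum_eq List.cons_injective ?_).symm
  intro w hw
  have h := hF w (by simpa [Function.mem_support] using hw)
  cases w with
  | nil => simp at h
  | cons y s =>
    simp only [List.head?_cons, Option.some.injEq] at h
    exact ⟨s, by rw [h]⟩

lemma tsum_head_split [Fintype V] (G : List V → ℝ≥0∞) (h0 : G [] = 0) :
    ∑' t : List V, G t = ∑ x : V, ∑' t : List V, if t.head? = some x then G t else 0 := by
  rw [← Summable.tsum_finsetSum (fun i _ => ENNReal.summable)]
  apply tsum_congr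
  intro t
  cases t with
  | nil => simpa using h0
  | cons y s =>
    refine Eq.symm ?_
    have heq : ∀ x : V, (if (y::s).head? = some x then G (y::s) else 0)
        = (if y = x then G (y::s) else 0) := by
      intro x; simp [List.head?_cons]
    rw [Finset.sum_congr rfl fun x _ => heq x, Finset.sum_ite_eq]
    simp

lemma tsum_walk_split [Fintype V] (v : V) (F : List V → ℝ≥0∞)
    (hF : ∀ w, F w ≠ 0 → w.head? = some v ∧ 1 < w.length) :
    ∑' w : List V, F w = ∑ x : V, ∑' t : List V, if t.head? = some x then F (v :: t) else 0 := by
  rw [tsum_cons_eq v F fun w h => (hF w h).1]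
  refine tsum_head_split (fun t => F (v :: t)) ?_
  by_contra h
  have := (hF [v] h).2
  simp at this

end Helpers2

section Helpers3

open ENNReal

variable (I : V → Finset V) (c : ℝ)

lemma mass_len [Fintype V] (hI : ∀ v, (I v).Nonempty) (hc0 : 0 < c) (hc1 : c < 1) :
    ∀ (n : ℕ) (v : V), (∑' w : List V, if w.length = n + 1 then Ww I c v w else 0)
      = ENNReal.ofReal ((1 - Real.sqrt c) * Real.sqrt c ^ n) := by
  intro n
  induction n with
  | zero =>
    intro v
    rw [tsum_eq_single [v] ?_]
    · have hw : IsWalkFrom I v [v] := ⟨rfl, List.isChain_singleton v⟩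
      rw [if_pos (by simp)]
      unfold Ww walkWeight
      rw [if_pos hw]
      simp
    · intro w hwne
      split_ifs with hlen
      · by_contra h
        have hwalk := isWalkFrom_of_Ww_ne I c h
        apply hwne
        cases w with
        | nil => simp at hlen
        | cons y s =>
          have hs : s = [] := by simpa using hlen
          subst hs
          have hy : y = v := by simpa [IsWalkFrom] using hwalk.1
          rw [hy]
      · rfl
  | succ n ih =>
    intro v
    set F : List V → ℝ≥0∞ := fun w => if w.length = n + 2 then Ww I c v w else 0 with hFdef
    have hsupp : ∀ w, F w ≠ 0 → w.head? = some v ∧ 1 < w.length := by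
      intro w h
      have hlen : w.length = n + 2 := by
        by_contra hl
        simp [hFdef, hl] at h
      have hW : Ww I c v w ≠ 0 := by simpa [hFdef, hlen] using h
      exact ⟨(isWalkFrom_of_Ww_ne I c hW).1, by omega⟩
    have hgoal : (∑' w : List V, if w.length = n + 1 + 1 then Ww I c v w else 0) = ∑' w, F w := by
      apply tsum_congr; intro w; rfl
    rw [hgoal, tsum_walk_split v F hsupp]
    have step : ∀ x : V, (∑' t : List V, if t.head? = some x then F (v :: t) else 0)
        = (if x ∈ I v then ENNReal.ofReal (Real.sqrt c / ((I v).card : ℝ)) else 0)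
            * ENNReal.ofReal ((1 - Real.sqrt c) * Real.sqrt c ^ n) := by
      intro x
      have hterm : ∀ t : List V, (if t.head? = some x then F (v :: t) else 0)
          = (if x ∈ I v then ENNReal.ofReal (Real.sqrt c / ((I v).card : ℝ)) else 0)
              * (if t.length = n + 1 then Ww I c x t else 0) := by
        intro t
        by_cases ht : t.head? = some x
        · rw [if_pos ht]
          simp only [hFdef]
          by_cases hl : t.length = n + 1
          · rw [if_pos (by simp [hl]), if_pos hl, Ww_cons I c hc0.le ht]
          · rw [if_neg (by simp only [List.length_cons]; omega), if_neg hl, mul_zero]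
        · rw [if_neg ht]
          have hW0 : Ww I c x t = 0 := by
            by_contra h
            exact ht (isWalkFrom_of_Ww_ne I c h).1
          simp [hW0]
      rw [tsum_congr hterm, ENNReal.tsum_mul_left, ih x]
    rw [Finset.sum_congr rfl fun x _ => step x]
    have hsplit : ∀ x : V, (if x ∈ I v then ENNReal.ofReal (Real.sqrt c / ((I v).card : ℝ)) else 0)
        * ENNReal.ofReal ((1 - Real.sqrt c) * Real.sqrt c ^ n)
        = if x ∈ I v then ENNReal.ofReal (Real.sqrt c / ((I v).card : ℝ))
            * ENNReal.ofReal ((1 - Real.sqrt c) * Real.sqrt c ^ n) else 0 := by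
      intro x; split_ifs <;> simp
    rw [Finset.sum_congr rfl fun x _ => hsplit x, Finset.sum_ite_mem, Finset.univ_inter,
      Finset.sum_const, nsmul_eq_mul]
    have hcard : (0:ℝ) < ((I v).card : ℝ) := by exact_mod_cast (hI v).card_pos
    rw [show (((I v).card : ℕ) : ℝ≥0∞) = ENNReal.ofReal (((I v).card : ℕ) : ℝ) by
      rw [ENNReal.ofReal_natCast]]
    rw [← ENNReal.ofReal_mul (div_nonneg (Real.sqrt_nonneg c) (Nat.cast_nonneg _)),
      ← ENNReal.ofReal_mul (Nat.cast_nonneg _)]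
    congr 1
    have hs1 := sqrt_lt_one' c hc0.le hc1
    field_simp
    ring

lemma mass [Fintype V] (hI : ∀ v, (I v).Nonempty) (hc0 : 0 < c) (hc1 : c < 1) (v : V) :
    ∑' w : List V, Ww I c v w = 1 := by
  have hr1 : Real.sqrt c < 1 := sqrt_lt_one' c hc0.le hc1
  have h1 : ∀ w : List V, Ww I c v w = ∑' n : ℕ, if w.length = n + 1 then Ww I c v w else 0 := by
    intro w
    cases w with
    | nil =>
      have h0 : Ww I c v [] = 0 := by simp [Ww, walkWeight, IsWalkFrom]
      rw [h0]
      symm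
      simp
    | cons y s =>
      rw [tsum_eq_single s.length ?_]
      · simp
      · intro n hn
        rw [if_neg (by simp only [List.length_cons]; omega)]
  calc ∑' w : List V, Ww I c v w
      = ∑' (w : List V) (n : ℕ), if w.length = n + 1 then Ww I c v w else 0 := tsum_congr h1
    _ = ∑' (n : ℕ) (w : List V), if w.length = n + 1 then Ww I c v w else 0 := ENNReal.tsum_comm
    _ = ∑' n : ℕ, ENNReal.ofReal ((1 - Real.sqrt c) * Real.sqrt c ^ n) :=
        tsum_congr fun n => mass_len I c hI hc0 hc1 n v
    _ = 1 := by
      have hsplit : ∀ n : ℕ, ENNReal.ofReal ((1 - Real.sqrt c) * Real.sqrt c ^ n)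
          = ENNReal.ofReal (1 - Real.sqrt c) * ENNReal.ofReal (Real.sqrt c) ^ n := by
        intro n
        rw [ENNReal.ofReal_mul (by linarith), ENNReal.ofReal_pow (Real.sqrt_nonneg c)]
      have hgeom : (1 : ℝ≥0∞) - ENNReal.ofReal (Real.sqrt c) = ENNReal.ofReal (1 - Real.sqrt c) := by
        rw [ENNReal.ofReal_sub _ (Real.sqrt_nonneg c), ENNReal.ofReal_one]
      rw [tsum_congr hsplit, ENNReal.tsum_mul_left, ENNReal.tsum_geometric, hgeom]
      exact ENNReal.mul_inv_cancel (ENNReal.ofReal_pos.mpr (by linarith)).ne' ENNReal.ofReal_ne_top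

end Helpers3

section Helpers4

open ENNReal

variable (I : V → Finset V) (c : ℝ)

lemma firstMeet_cons (w₁ : List V) (v : V) (t : List V) (k : ℕ) :
    FirstMeet w₁ (v :: t) (k + 1) ↔ w₁[0]? ≠ some v ∧ FirstMeet (w₁.drop 1) t k := by
  unfold FirstMeet
  constructor
  · rintro ⟨h1, h2, h3, h4⟩
    refine ⟨?_, ?_, ?_, ?_, ?_⟩
    · have h := h4 0 (Nat.succ_pos k)
      simpa using h
    · rw [List.length_drop]; omega
    · simp only [List.length_cons] at h2; omega
    · rw [List.getElem?_drop, Nat.add_comm 1 k]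
      rw [List.getElem?_cons_succ] at h3
      exact h3
    · intro j hj
      rw [List.getElem?_drop, Nat.add_comm 1 j]
      have h := h4 (j+1) (by omega)
      rwa [List.getElem?_cons_succ] at h
  · rintro ⟨hA, hB, hC, hD, hE⟩
    rw [List.length_drop] at hB
    refine ⟨by omega, by simp only [List.length_cons]; omega, ?_, ?_⟩
    · rw [List.getElem?_cons_succ]
      rwa [List.getElem?_drop, Nat.add_comm 1 k] at hD
    · intro j hj
      cases j with
      | zero => simpa using hA
      | succ i =>
        rw [List.getElem?_cons_succ]
        have h := hE i (by omega)
        rwa [List.getElem?_drop, Nat.add_comm 1 i] at h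

lemma meets_iff_exists_firstMeet (w₁ w₂ : List V) :
    Meets w₁ w₂ ↔ ∃ k, FirstMeet w₁ w₂ k := by
  constructor
  · intro h
    have hP : ∃ k, k < w₁.length ∧ k < w₂.length ∧ w₁[k]? = w₂[k]? := h
    obtain ⟨h1, h2, h3⟩ := Nat.find_spec hP
    refine ⟨Nat.find hP, h1, h2, h3, ?_⟩
    intro j hj hEq
    exact Nat.find_min hP hj ⟨by omega, by omega, hEq⟩
  · rintro ⟨k, h1, h2, h3, -⟩
    exact ⟨k, h1, h2, h3⟩

lemma firstMeet_unique {w₁ w₂ : List V} {k k' : ℕ}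
    (h : FirstMeet w₁ w₂ k) (h' : FirstMeet w₁ w₂ k') : k = k' := by
  by_contra hne
  rcases Nat.lt_or_ge k k' with hlt | hge
  · exact h'.2.2.2 k hlt h.2.2.1
  · exact h.2.2.2 k' (by omega) h'.2.2.1

lemma indicator_meets (w₁ w₂ : List V) :
    (if Meets w₁ w₂ then (1:ℝ≥0∞) else 0) = ∑' k : ℕ, if FirstMeet w₁ w₂ k then 1 else 0 := by
  by_cases h : Meets w₁ w₂
  · obtain ⟨k, hk⟩ := (meets_iff_exists_firstMeet w₁ w₂).mp h
    rw [if_pos h, tsum_eq_single k ?_, if_pos hk]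
    intro k' hk'
    rw [if_neg (fun h' => hk' (firstMeet_unique h' hk))]
  · rw [if_neg h]
    refine (ENNReal.tsum_eq_zero.mpr ?_).symm
    intro k
    rw [if_neg (fun hk => h ((meets_iff_exists_firstMeet w₁ w₂).mpr ⟨k, hk⟩))]

lemma key [Fintype V] (hI : ∀ v, (I v).Nonempty) (hc0 : 0 < c) (hc1 : c < 1) :
    ∀ (k : ℕ) (w₁ : List V) (v : V), k < w₁.length →
      (∑' w₂ : List V, if FirstMeet w₁ w₂ k then Ww I c v w₂ else 0)
        = ENNReal.ofReal (Score I c ((w₁.take (k + 1)).reverse) k v) := by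
  intro k
  induction k with
  | zero =>
    intro w₁ v hk
    obtain ⟨a, s, rfl⟩ : ∃ a s, w₁ = a :: s := by
      cases w₁ with
      | nil => simp at hk
      | cons a s => exact ⟨a, s, rfl⟩
    have hterm : ∀ w₂ : List V, (if FirstMeet (a :: s) w₂ 0 then Ww I c v w₂ else 0)
        = (if a = v then 1 else 0) * Ww I c v w₂ := by
      intro w₂
      by_cases hW : Ww I c v w₂ = 0
      · rw [hW, mul_zero]
        split_ifs <;> rfl
      · have hwalk := isWalkFrom_of_Ww_ne I c hW
        have hhead : w₂[0]? = some v := by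
          rw [← List.head?_eq_getElem?]; exact hwalk.1
        have hFM : FirstMeet (a :: s) w₂ 0 ↔ a = v := by
          unfold FirstMeet
          constructor
          · rintro ⟨-, -, h3, -⟩
            rw [hhead] at h3
            simpa using h3
          · intro hav
            have hlen2 : 0 < w₂.length := by
              cases w₂ with
              | nil => simp at hhead
              | cons y ys => simp
            exact ⟨by simp, hlen2, by rw [hhead]; simp [hav],
              fun j hj => absurd hj (Nat.not_lt_zero j)⟩
        by_cases hav : a = v
        · rw [if_pos (hFM.mpr hav), if_pos hav, one_mul]
        · rw [if_neg (fun h => hav (hFM.mp h)), if_neg hav, zero_mul]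
    rw [tsum_congr hterm, ENNReal.tsum_mul_left, mass I c hI hc0 hc1 v, mul_one]
    have hq : ((a :: s).take 1).reverse = [a] := by simp
    rw [hq]
    simp only [Score]
    by_cases hav : a = v
    · rw [if_pos hav, if_pos (by simp [hav]), ENNReal.ofReal_one]
    · rw [if_neg hav, if_neg (by simp [hav]), ENNReal.ofReal_zero]
  | succ k ih =>
    intro w₁ v hk
    have hq_top : ((w₁.take (k + 2)).reverse)[k + 1]? = w₁[0]? := by
      rw [List.getElem?_reverse (by rw [List.length_take]; omega)]
      have h0 : (List.take (k+2) w₁).length - 1 - (k+1) = 0 := by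
        rw [List.length_take]; omega
      rw [h0, List.getElem?_take, if_pos (by omega)]
    have hkd : k < (w₁.drop 1).length := by rw [List.length_drop]; omega
    have hqq' : ∀ m ≤ k, ((w₁.take (k + 2)).reverse)[m]?
        = (((w₁.drop 1).take (k + 1)).reverse)[m]? := by
      intro m hm
      rw [List.getElem?_reverse (by rw [List.length_take]; omega),
        List.getElem?_reverse (by rw [List.length_take, List.length_drop]; omega)]
      have e1 : (List.take (k+2) w₁).length - 1 - m = k + 1 - m := by
        rw [List.length_take]; omega
      have e2 : (List.take (k+1) (w₁.drop 1)).length - 1 - m = k - m := by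
        rw [List.length_take, List.length_drop]; omega
      rw [e1, e2, List.getElem?_take, List.getElem?_take, if_pos (by omega), if_pos (by omega),
        List.getElem?_drop]
      congr 1
      omega
    have hscore : Score I c ((w₁.take (k + 2)).reverse) (k + 1) v
        = if w₁[0]? = some v then 0
          else ∑ x ∈ I v, Real.sqrt c / ((I v).card : ℝ)
            * Score I c (((w₁.drop 1).take (k + 1)).reverse) k x := by
      simp only [Score]
      rw [hq_top]
      split_ifs with h
      · rfl
      · exact Finset.sum_congr rfl fun x _ => by
          rw [score_congr I c k _ _ hqq' x]
    set F : List V → ℝ≥0∞ := fun w₂ => if FirstMeet w₁ w₂ (k+1) then Ww I c v w₂ else 0 with hFdef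
    have hsupp : ∀ w, F w ≠ 0 → w.head? = some v ∧ 1 < w.length := by
      intro w h
      have hFM : FirstMeet w₁ w (k+1) := by
        by_contra hn
        simp [hFdef, hn] at h
      have hW : Ww I c v w ≠ 0 := by simpa [hFdef, hFM] using h
      exact ⟨(isWalkFrom_of_Ww_ne I c hW).1, by have := hFM.2.1; omega⟩
    have hgoal : (∑' w₂ : List V, if FirstMeet w₁ w₂ (k + 1) then Ww I c v w₂ else 0)
        = ∑' w₂, F w₂ := tsum_congr fun w => rfl
    rw [hgoal, tsum_walk_split v F hsupp]
    have hx : ∀ x : V, (∑' t : List V, if t.head? = some x then F (v :: t) else 0)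
        = (if w₁[0]? = some v then 0 else 1)
            * ((if x ∈ I v then ENNReal.ofReal (Real.sqrt c / ((I v).card : ℝ)) else 0)
              * ENNReal.ofReal (Score I c (((w₁.drop 1).take (k + 1)).reverse) k x)) := by
      intro x
      have hterm : ∀ t : List V, (if t.head? = some x then F (v :: t) else 0)
          = (if w₁[0]? = some v then 0 else 1)
              * ((if x ∈ I v then ENNReal.ofReal (Real.sqrt c / ((I v).card : ℝ)) else 0)
                * (if FirstMeet (w₁.drop 1) t k then Ww I c x t else 0)) := by
        intro t
        by_cases ht : t.head? = some x
        · rw [if_pos ht]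
          simp only [hFdef, firstMeet_cons w₁ v t k, Ww_cons I c hc0.le ht]
          by_cases hA : w₁[0]? = some v
          · rw [if_neg (by tauto), if_pos hA, zero_mul]
          · rw [if_neg hA, one_mul]
            by_cases hB : FirstMeet (w₁.drop 1) t k
            · rw [if_pos ⟨hA, hB⟩, if_pos hB]
            · rw [if_neg (by tauto), if_neg hB, mul_zero]
        · rw [if_neg ht]
          have hW0 : Ww I c x t = 0 := by
            by_contra h
            exact ht (isWalkFrom_of_Ww_ne I c h).1
          simp [hW0]
      rw [tsum_congr hterm, ENNReal.tsum_mul_left, ENNReal.tsum_mul_left,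
        ih (w₁.drop 1) x hkd]
    rw [Finset.sum_congr rfl fun x _ => hx x, ← Finset.mul_sum]
    have hsplit : ∀ x : V,
        (if x ∈ I v then ENNReal.ofReal (Real.sqrt c / ((I v).card : ℝ)) else 0)
          * ENNReal.ofReal (Score I c (((w₁.drop 1).take (k + 1)).reverse) k x)
        = if x ∈ I v then ENNReal.ofReal (Real.sqrt c / ((I v).card : ℝ)
            * Score I c (((w₁.drop 1).take (k + 1)).reverse) k x) else 0 := by
      intro x
      split_ifs with h
      · rw [ENNReal.ofReal_mul (div_nonneg (Real.sqrt_nonneg c) (Nat.cast_nonneg _))]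
      · rw [zero_mul]
    rw [Finset.sum_congr rfl fun x _ => hsplit x, Finset.sum_ite_mem, Finset.univ_inter,
      ← ENNReal.ofReal_sum_of_nonneg (fun i _ =>
        mul_nonneg (div_nonneg (Real.sqrt_nonneg c) (Nat.cast_nonneg _))
          (score_nonneg I c hc0.le k _ i)),
      hscore]
    by_cases hA : w₁[0]? = some v
    · rw [if_pos hA, if_pos hA, zero_mul, ENNReal.ofReal_zero]
    · rw [if_neg hA, if_neg hA, one_mul]

end Helpers4

section Helpers5

open ENNReal

variable (I : V → Finset V) (c : ℝ)

lemma per_walk [Fintype V] (hI : ∀ v, (I v).Nonempty) (hc0 : 0 < c) (hc1 : c < 1)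
    {u v : V} (hv : v ≠ u) (w₁ : List V) (h₁ : w₁.head? = some u) :
    (∑' w₂ : List V, Ww I c v w₂ * if Meets w₁ w₂ then 1 else 0)
      = ENNReal.ofReal (estimator I c w₁ v) := by
  obtain ⟨s, rfl⟩ : ∃ s, w₁ = u :: s := by
    cases w₁ with
    | nil => simp at h₁
    | cons y s =>
      simp only [List.head?_cons, Option.some.injEq] at h₁
      exact ⟨s, by rw [h₁]⟩
  have step1 : ∀ w₂ : List V, Ww I c v w₂ * (if Meets (u :: s) w₂ then 1 else 0)
      = ∑' k : ℕ, (if FirstMeet (u :: s) w₂ k then Ww I c v w₂ else 0) := by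
    intro w₂
    rw [indicator_meets, ← ENNReal.tsum_mul_left]
    exact tsum_congr fun k => by rw [mul_ite, mul_one, mul_zero]
  rw [tsum_congr step1, ENNReal.tsum_comm]
  have hzero : ∀ k ∉ Finset.range (u :: s).length,
      (∑' w₂ : List V, if FirstMeet (u :: s) w₂ k then Ww I c v w₂ else 0) = 0 := by
    intro k hk
    simp only [Finset.mem_range, not_lt] at hk
    apply ENNReal.tsum_eq_zero.mpr
    intro w₂
    rw [if_neg (fun h => by have := h.1; omega)]
  rw [tsum_eq_sum hzero,
    Finset.sum_congr rfl fun k hk => key I c hI hc0 hc1 k (u :: s) v (Finset.mem_range.mp hk)]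
  rw [show (u :: s).length = s.length + 1 from rfl, Finset.sum_range_succ']
  have hzero0 : ENNReal.ofReal (Score I c (((u :: s).take (0 + 1)).reverse) 0 v) = 0 := by
    have hq : ((u :: s).take (0 + 1)).reverse = [u] := by simp
    rw [hq]
    simp only [Score]
    rw [if_neg (by
      simp only [List.head?_cons, Option.some.injEq]
      exact fun h => hv h.symm), ENNReal.ofReal_zero]
  rw [hzero0, add_zero]
  unfold estimator
  rw [ENNReal.ofReal_sum_of_nonneg (fun i _ => score_nonneg I c hc0.le _ _ v)]
  rw [show (u :: s).length = s.length + 1 from rfl, ← Finset.Ico_add_one_right_eq_Icc,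
    Finset.sum_Ico_eq_sum_range]
  rw [show s.length + 1 + 1 - 2 = s.length from by omega]
  refine Finset.sum_congr rfl fun k _ => ?_
  simp only [show 2 + k = k + 1 + 1 from by omega, Nat.add_sub_cancel]

lemma tsum_eq_tsum_of_ofReal {α : Type*} {β : Type*} {f : α → ℝ} {g : β → ℝ}
    (hf : ∀ x, 0 ≤ f x) (hg : ∀ x, 0 ≤ g x)
    (h : (∑' x, ENNReal.ofReal (f x)) = ∑' x, ENNReal.ofReal (g x)) :
    ∑' x, f x = ∑' x, g x := by
  by_cases hfin : (∑' x, ENNReal.ofReal (f x)) = ⊤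
  · have hf' : ¬ Summable f := by
      intro hs
      rw [← ENNReal.ofReal_tsum_of_nonneg hf hs] at hfin
      exact ENNReal.ofReal_ne_top hfin
    have hg' : ¬ Summable g := by
      intro hs
      rw [h, ← ENNReal.ofReal_tsum_of_nonneg hg hs] at hfin
      exact ENNReal.ofReal_ne_top hfin
    rw [tsum_eq_zero_of_not_summable hf', tsum_eq_zero_of_not_summable hg']
  · have hsf : Summable f := by
      have h2 := ENNReal.summable_toReal hfin
      have h3 : (fun x => (ENNReal.ofReal (f x)).toReal) = f := by
        funext x; exact ENNReal.toReal_ofReal (hf x)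
      rwa [h3] at h2
    have hsg : Summable g := by
      have h2 := ENNReal.summable_toReal (h ▸ hfin)
      have h3 : (fun x => (ENNReal.ofReal (g x)).toReal) = g := by
        funext x; exact ENNReal.toReal_ofReal (hg x)
      rwa [h3] at h2
    have heq : ENNReal.ofReal (∑' x, f x) = ENNReal.ofReal (∑' x, g x) := by
      rw [ENNReal.ofReal_tsum_of_nonneg hf hsf, ENNReal.ofReal_tsum_of_nonneg hg hsg, h]
    exact (ENNReal.ofReal_eq_ofReal_iff (tsum_nonneg hf) (tsum_nonneg hg)).mp heq

end Helpers5


/-- Lemma 3.1: the single-trial estimator is unbiased: for `v ≠ u`, the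
expectation of `s̃_W(v)` over a random `√c`-walk `W` from `u` equals `s(u,v)`,
the probability that two independent `√c`-walks from `u` and from `v` meet. -/
theorem estimator_unbiased [Fintype V]
    (I : V → Finset V) (hI : ∀ v, (I v).Nonempty)
    (c : ℝ) (hc0 : 0 < c) (hc1 : c < 1)
    (u v : V) (hv : v ≠ u) :
    ∑' w : List V, walkWeight I c u w * estimator I c w v = simRank I c u v := by
  have hWnn := walkWeight_nonneg I c hc0.le hc1
  have hest : ∀ w : List V, 0 ≤ estimator I c w v := fun w =>
    Finset.sum_nonneg fun i _ => score_nonneg I c hc0.le _ _ v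
  rw [simRank]
  refine tsum_eq_tsum_of_ofReal
    (f := fun w : List V => walkWeight I c u w * estimator I c w v)
    (g := fun p : List V × List V =>
      walkWeight I c u p.1 * walkWeight I c v p.2 * (if Meets p.1 p.2 then 1 else 0))
    (fun w => mul_nonneg (hWnn u w) (hest w))
    (fun p => mul_nonneg (mul_nonneg (hWnn u p.1) (hWnn v p.2)) (by split_ifs <;> norm_num))
    ?_
  have hL : ∀ w : List V, ENNReal.ofReal (walkWeight I c u w * estimator I c w v)
      = Ww I c u w * (∑' w₂ : List V, Ww I c v w₂ * if Meets w w₂ then 1 else 0) := by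
    intro w
    rw [ENNReal.ofReal_mul (hWnn u w)]
    by_cases hW : Ww I c u w = 0
    · rw [show ENNReal.ofReal (walkWeight I c u w) = Ww I c u w from rfl, hW, zero_mul, zero_mul]
    · have h₁ := (isWalkFrom_of_Ww_ne I c hW).1
      rw [show ENNReal.ofReal (walkWeight I c u w) = Ww I c u w from rfl,
        per_walk I c hI hc0 hc1 hv w h₁]
  rw [tsum_congr hL]
  have hR : ∀ p : List V × List V,
      ENNReal.ofReal (walkWeight I c u p.1 * walkWeight I c v p.2
        * (if Meets p.1 p.2 then 1 else 0))
      = Ww I c u p.1 * (Ww I c v p.2 * (if Meets p.1 p.2 then 1 else 0)) := by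
    intro p
    rw [ENNReal.ofReal_mul (mul_nonneg (hWnn u p.1) (hWnn v p.2)),
      ENNReal.ofReal_mul (hWnn u p.1), mul_assoc]
    congr 1
    congr 1
    split_ifs
    · exact ENNReal.ofReal_one
    · exact ENNReal.ofReal_zero
  rw [tsum_congr hR, ENNReal.tsum_prod
    (f := fun a b => Ww I c u a * (Ww I c v b * if Meets a b then 1 else 0))]
  exact tsum_congr fun w => (ENNReal.tsum_mul_left).symm
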